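/- Let α(t), β(t), γ(t) be smooth 1-parameter families of 1-forms on M with dα = α ∧ β and dβ = α ∧ γ for every t. Then the 4-form β̇ ∧ β ∧ dβ is closed for every t. -/
import Mathlib


/-- An abstract algebra of (differential) forms on a smooth manifold `M`: a normed
`ℝ`-algebra `Ω` (the algebra of smooth differential forms, normed so that one can
speak of smooth/differentiable one-parameter families), equipped with a grading
predicate `IsDeg n a` ("`a` is a homogeneous form of degree `n`") and an exterior
differential `d`, a continuous linear map satisfying the graded Leibniz rule,
graded commutativity and `d ∘ d = 0`. -/
class FormAlgebra (Ω : Type*) [NormedRing Ω] [NormedAlgebra ℝ Ω] where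
  /-- `IsDeg n a` means that `a` is a homogeneous form of degree `n`. -/
  IsDeg : ℕ → Ω → Prop
  /-- The exterior differential. -/
  d : Ω →L[ℝ] Ω
  isDeg_d : ∀ {n : ℕ} {a : Ω}, IsDeg n a → IsDeg (n + 1) (d a)
  isDeg_mul : ∀ {m n : ℕ} {a b : Ω}, IsDeg m a → IsDeg n b → IsDeg (m + n) (a * b)
  d_mul : ∀ {m : ℕ} (a b : Ω), IsDeg m a →
    d (a * b) = d a * b + (-1 : ℝ) ^ m • (a * d b)
  deg_mul_comm : ∀ {m n : ℕ} (a b : Ω), IsDeg m a → IsDeg n b →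
    a * b = (-1 : ℝ) ^ (m * n) • (b * a)
  d_d : ∀ a : Ω, d (d a) = 0

open FormAlgebra


section Aux
variable {Ω : Type*} [NormedRing Ω] [NormedAlgebra ℝ Ω] [FormAlgebra Ω]

lemma ac {a b : Ω} (ha : IsDeg 1 a) (hb : IsDeg 1 b) : a * b = -(b * a) := by
  have h := deg_mul_comm a b ha hb
  simpa using h

lemma sq0 {a : Ω} (ha : IsDeg 1 a) : a * a = 0 := by
  have h := ac ha ha
  have h2 : (2 : ℝ) • (a * a) = 0 := by
    rw [two_smul]; nth_rewrite 1 [h]; simp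
  simpa using (smul_eq_zero.mp h2).resolve_left (by norm_num)

lemma swap3 {a b : Ω} (ha : IsDeg 1 a) (hb : IsDeg 1 b) (x : Ω) :
    a * (b * x) = -(b * (a * x)) := by
  rw [← mul_assoc, ac ha hb, neg_mul, mul_assoc]

lemma triple {a b : Ω} (ha : IsDeg 1 a) (hb : IsDeg 1 b) : a * (b * a) = 0 := by
  rw [ac hb ha, mul_neg, ← mul_assoc, sq0 ha, zero_mul, neg_zero]

lemma quad {a b : Ω} (ha : IsDeg 1 a) (hb : IsDeg 1 b) (x : Ω) :
    a * (b * (a * x)) = 0 := by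
  rw [swap3 ha hb, ← mul_assoc a a x, sq0 ha, zero_mul, mul_zero, neg_zero]

end Aux

/-- Let `α(t), β(t), γ(t)` be smooth 1-parameter families of 1-forms on `M` with
`dα = α ∧ β` and `dβ = α ∧ γ` for every `t`.  Then the 4-form `β̇ ∧ β ∧ dβ` is
closed for every `t`. -/
theorem statement5 {Ω : Type*} [NormedRing Ω] [NormedAlgebra ℝ Ω] [FormAlgebra Ω]
    (α β γ α' β' γ' : ℝ → Ω)
    (hαd : ∀ t, HasDerivAt α (α' t) t)
    (hβd : ∀ t, HasDerivAt β (β' t) t)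
    (hγd : ∀ t, HasDerivAt γ (γ' t) t)
    (hα : ∀ t, IsDeg 1 (α t)) (hβ : ∀ t, IsDeg 1 (β t)) (hγ : ∀ t, IsDeg 1 (γ t))
    (hα' : ∀ t, IsDeg 1 (α' t)) (hβ' : ∀ t, IsDeg 1 (β' t)) (hγ' : ∀ t, IsDeg 1 (γ' t))
    (heq1 : ∀ t, d (α t) = α t * β t)
    (heq2 : ∀ t, d (β t) = α t * γ t) :
    ∀ t, d (β' t * β t * d (β t)) = 0 := by
  intro t
  have hdb' : d (β' t) = α' t * γ t + α t * γ' t := by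
    have h1 : HasDerivAt (fun s => d (β s)) (d (β' t)) t :=
      (FormAlgebra.d (Ω := Ω)).hasFDerivAt.comp_hasDerivAt t (hβd t)
    have h2 : HasDerivAt (fun s => α s * γ s) (α' t * γ t + α t * γ' t) t :=
      (hαd t).mul (hγd t)
    have hfun : (fun s => d (β s)) = fun s => α s * γ s := funext heq2
    rw [hfun] at h1
    exact h1.unique h2
  have hbb : IsDeg 2 (β' t * β t) := isDeg_mul (hβ' t) (hβ t)
  rw [d_mul (β' t * β t) (d (β t)) hbb, d_d (β t)]
  simp only [mul_zero, smul_zero, add_zero]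
  rw [d_mul (β' t) (β t) (hβ' t), hdb', heq2 t]
  have z1 : α' t * (γ t * (β t * (α t * γ t))) = 0 := by
    rw [swap3 (hγ t) (hβ t), triple (hγ t) (hα t)]
    simp
  have z2 : α t * (γ' t * (β t * (α t * γ t))) = 0 := by
    rw [swap3 (hγ' t) (hβ t), swap3 (hγ' t) (hα t)]
    simp only [mul_neg, neg_neg]
    exact quad (hα t) (hβ t) _
  have z3 : β' t * (α t * (γ t * (α t * γ t))) = 0 := by
    rw [triple (hγ t) (hα t)]
    simp
  simp [add_mul, mul_assoc, z1, z2, z3]
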